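/- Let λ, μ > 0, p ∈ (0,1], and let p̃, t̃, s̃ be real numbers such that λp̃² + (μ−λ)p̃ = μp, μ − λ + 2λp̃ > 0, and μ − λ + λp̃ > 0. Suppose that p̃t̃ = (μ/(λ+μ))·p·(1/(λ+μ)) + (λ/(λ+μ))·[ p̃·(1/(λ+μ) + t̃) + (1−p̃)·p̃·(1/(λ+μ) + s̃ + t̃) ] and (1−p̃)s̃ = (μ(1−p)/(λ+μ))·(1/(λ+μ)) + (λ/(λ+μ))·(1−p̃)²·(1/(λ+μ) + 2s̃). Then (1−p̃)s̃ = (1−p̃)/(μ − λ + 2λp̃) and p̃t̃ = [ p̃ + (μ/(μ−λ+2λp̃))·(p̃ − p) ] / (μ − λ + λp̃). -/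

import Mathlib

/-- Solving the renewal equations for `p̃ t̃` and `(1−p̃) s̃` in the LCFS
preemptive-priority M/M/1 queue with delivery errors. -/
theorem lcfs_preemptive_ttilde_stilde (lam mu p pt tt st : ℝ)
    (hlam : 0 < lam) (hmu : 0 < mu) (hp : p ∈ Set.Ioc (0 : ℝ) 1)
    (hquad : lam * pt ^ 2 + (mu - lam) * pt = mu * p)
    (hd1 : 0 < mu - lam + 2 * lam * pt)
    (hd2 : 0 < mu - lam + lam * pt)
    (htt : pt * tt
      = mu / (lam + mu) * p * (1 / (lam + mu))
        + lam / (lam + mu) * (pt * (1 / (lam + mu) + tt)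
            + (1 - pt) * pt * (1 / (lam + mu) + st + tt)))
    (hst : (1 - pt) * st
      = mu * (1 - p) / (lam + mu) * (1 / (lam + mu))
        + lam / (lam + mu) * (1 - pt) ^ 2 * (1 / (lam + mu) + 2 * st)) :
    (1 - pt) * st = (1 - pt) / (mu - lam + 2 * lam * pt) ∧
    pt * tt = (pt + mu / (mu - lam + 2 * lam * pt) * (pt - p)) / (mu - lam + lam * pt) := by
  have hDne : (lam + mu) ≠ 0 := by positivity
  have hd1ne : (mu - lam + 2 * lam * pt) ≠ 0 := ne_of_gt hd1
  have hd2ne : (mu - lam + lam * pt) ≠ 0 := ne_of_gt hd2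
  field_simp at hst htt
  have key1 : (1 - pt) * st * (mu - lam + 2 * lam * pt) * (lam + mu)
      = (1 - pt) * (lam + mu) := by linear_combination hst + hquad
  have h1' : (1 - pt) * st * (mu - lam + 2 * lam * pt) = 1 - pt :=
    mul_right_cancel₀ hDne key1
  have key2 : pt * tt * (mu - lam + lam * pt) * ((mu - lam + 2 * lam * pt) * (lam + mu))
      = (pt * (mu - lam + 2 * lam * pt) + mu * (pt - p)) * (lam + mu) := by
    linear_combination (mu - lam + 2 * lam * pt) * htt
      + lam * (lam + mu) * pt * h1'
      - (mu - lam + 2 * lam * pt + lam + mu) * hquad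
  have h2' : pt * tt * (mu - lam + lam * pt) * (mu - lam + 2 * lam * pt)
      = pt * (mu - lam + 2 * lam * pt) + mu * (pt - p) := by
    have key2' : (pt * tt * (mu - lam + lam * pt) * (mu - lam + 2 * lam * pt)) * (lam + mu)
        = (pt * (mu - lam + 2 * lam * pt) + mu * (pt - p)) * (lam + mu) := by
      linear_combination key2
    exact mul_right_cancel₀ hDne key2'
  constructor
  · rw [eq_div_iff hd1ne]; exact h1'
  · rw [eq_div_iff hd2ne]
    have e : mu / (mu - lam + 2 * lam * pt) = mu * (mu - lam + 2 * lam * pt)⁻¹ := div_eq_mul_inv _ _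
    have hinv : (mu - lam + 2 * lam * pt) * (mu - lam + 2 * lam * pt)⁻¹ = 1 := mul_inv_cancel₀ hd1ne
    rw [e]
    linear_combination (mu - lam + 2 * lam * pt)⁻¹ * h2'
      + (pt - pt * tt * (mu - lam + lam * pt)) * hinv
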